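/- For any nonempty X ⊆ {0,1}^n and any x̃ ∈ X, the skeleton of the 0/1-polytope conv(X) admits a genlex Hamilton path starting at x̃. In particular, the skeleton of every 0/1-polytope has a Hamilton path starting at any prescribed vertex. -/

import Mathlib

def lamPos {n : ℕ} (x y : Fin n → Bool) : ℕ :=
  (Finset.univ.filter (fun i : Fin n => x i ≠ y i)).sup (fun i => (i : ℕ) + 1)

def hamming {n : ℕ} (x y : Fin n → Bool) : ℕ :=
  (Finset.univ.filter (fun i : Fin n => x i ≠ y i)).card

def sameSuffix {n : ℕ} (k : ℕ) (x y : Fin n → Bool) : Prop :=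
  ∀ i : Fin n, n - k ≤ (i : ℕ) → x i = y i

def IsOrdering {n : ℕ} (X : Finset (Fin n → Bool)) (L : List (Fin n → Bool)) : Prop :=
  L.Nodup ∧ ∀ x, x ∈ L ↔ x ∈ X

def IsGenlex {n : ℕ} (L : List (Fin n → Bool)) : Prop :=
  ∀ (k i j m : ℕ) (hij : i ≤ j) (hjm : j ≤ m) (hm : m < L.length),
    sameSuffix k (L.get ⟨i, by omega⟩) (L.get ⟨m, hm⟩) →
    sameSuffix k (L.get ⟨i, by omega⟩) (L.get ⟨j, by omega⟩)

def cost {n : ℕ} (L : List (Fin n → Bool)) : ℕ :=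
  (L.zipWith lamPos L.tail).sum

noncomputable def toVec {n : ℕ} (x : Fin n → Bool) : Fin n → ℝ := fun i => if x i then 1 else 0

def IsPolyEdge {n : ℕ} (X : Finset (Fin n → Bool)) (x y : Fin n → Bool) : Prop :=
  x ≠ y ∧ ∀ ν : ℝ, 0 < ν → ν < 1 →
    (ν • toVec x + (1 - ν) • toVec y) ∉
      convexHull ℝ (toVec '' (((X.erase x).erase y : Finset (Fin n → Bool)) : Set (Fin n → Bool)))

/-! ### Auxiliary lemmas -/

section Aux

lemma sameSuffix_zero {n : ℕ} (x y : Fin n → Bool) : sameSuffix 0 x y := by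
  intro i hi
  exact absurd hi (by omega)

lemma sameSuffix_snoc {n k : ℕ} {x y : Fin n → Bool} {b c : Bool} :
    sameSuffix (k+1) (Fin.snoc x b) (Fin.snoc y c) ↔ b = c ∧ sameSuffix k x y := by
  constructor
  · intro h
    constructor
    · have := h (Fin.last n) (by simp)
      simpa using this
    · intro i hi
      have := h i.castSucc (by simpa using by omega)
      simpa using this
  · rintro ⟨rfl, h⟩ i
    refine Fin.lastCases (fun _ => by simp) (fun j hj => ?_) i
    rw [Fin.snoc_castSucc, Fin.snoc_castSucc]
    exact h j (by simpa using hj)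

lemma coord_eq {ι : Type} {t : Finset ι} {w : ι → ℝ} (hw : ∀ i ∈ t, 0 < w i)
    (hs : ∑ i ∈ t, w i = 1) {g : ι → Bool} {c : Bool}
    (h : ∑ i ∈ t, w i * (if g i then (1:ℝ) else 0) = (if c then (1:ℝ) else 0)) :
    ∀ i ∈ t, g i = c := by
  cases c with
  | false =>
    simp only [if_neg Bool.false_ne_true, Bool.false_eq_true] at h
    have h0 := (Finset.sum_eq_zero_iff_of_nonneg (fun i hi => by
      have := (hw i hi).le
      positivity)).mp h
    intro i hi
    have := h0 i hi
    by_contra hgi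
    have hg : g i = true := by revert hgi; cases g i <;> simp
    rw [hg] at this
    simp at this
    exact absurd this (ne_of_gt (hw i hi))
  | true =>
    have h' : ∑ i ∈ t, w i * (1 - (if g i then (1:ℝ) else 0)) = 0 := by
      simp only [mul_sub, Finset.sum_sub_distrib, mul_one, hs, h]
      simp
    have h0 := (Finset.sum_eq_zero_iff_of_nonneg (fun i hi => by
      have h1 : (if g i then (1:ℝ) else 0) ≤ 1 := by split <;> norm_num
      have := (hw i hi).le
      nlinarith)).mp h'
    intro i hi
    have := h0 i hi
    by_contra hgi
    have hg : g i = false := by revert hgi; cases g i <;> simp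
    rw [hg] at this
    simp at this
    exact absurd this (ne_of_gt (hw i hi))

lemma coord_mem {ι : Type} {t : Finset ι} {w : ι → ℝ} (hw : ∀ i ∈ t, 0 < w i)
    (hs : ∑ i ∈ t, w i = 1) {g : ι → Bool} {r : ℝ} (h0 : 0 < r) (h1 : r < 1)
    (h : ∑ i ∈ t, w i * (if g i then (1:ℝ) else 0) = r) (c : Bool) :
    ∃ i ∈ t, g i = c := by
  by_contra hc
  push_neg at hc
  have hall : ∀ i ∈ t, g i = !c := by
    intro i hi
    have := hc i hi
    revert this; cases g i <;> cases c <;> simp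
  have : ∑ i ∈ t, w i * (if g i then (1:ℝ) else 0)
      = ∑ i ∈ t, w i * (if (!c) then (1:ℝ) else 0) := by
    refine Finset.sum_congr rfl fun i hi => by rw [hall i hi]
  rw [this] at h
  cases c with
  | false =>
    simp [hs] at h
    linarith
  | true =>
    simp at h
    linarith

lemma decode {n : ℕ} (S : Finset (Fin n → Bool)) (p : Fin n → ℝ)
    (h : p ∈ convexHull ℝ (toVec '' (S : Set (Fin n → Bool)))) :
    ∃ (ι : Type) (t : Finset ι) (w : ι → ℝ) (g : ι → (Fin n → Bool)),
      (∀ i ∈ t, 0 < w i) ∧ (∑ i ∈ t, w i) = 1 ∧ (∀ i ∈ t, g i ∈ S) ∧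
      ∀ j, (∑ i ∈ t, w i * (if g i j then (1:ℝ) else 0)) = p j := by
  classical
  rw [convexHull_eq] at h
  obtain ⟨ι, t, w, zf, hw0, hw1, hzS, hcm⟩ := h
  have hex : ∀ i : ι, ∃ u : Fin n → Bool, i ∈ t → (u ∈ S ∧ toVec u = zf i) := by
    intro i
    by_cases hi : i ∈ t
    · obtain ⟨u, huS, huv⟩ := hzS i hi
      exact ⟨u, fun _ => ⟨huS, huv⟩⟩
    · exact ⟨fun _ => false, fun h => absurd h hi⟩
  choose g hg using hex
  have hp : ∀ j, (∑ i ∈ t, w i * (if g i j then (1:ℝ) else 0)) = p j := by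
    intro j
    rw [← hcm, Finset.centerMass_eq_of_sum_1 _ _ hw1]
    rw [Finset.sum_apply]
    refine Finset.sum_congr rfl fun i hi => ?_
    rw [Pi.smul_apply, smul_eq_mul, ← (hg i hi).2]
    rfl
  refine ⟨ι, t.filter (fun i => w i ≠ 0), w, g, ?_, ?_, ?_, ?_⟩
  · intro i hi
    rw [Finset.mem_filter] at hi
    exact lt_of_le_of_ne (hw0 i hi.1) (Ne.symm hi.2)
  · rw [Finset.sum_filter_ne_zero]; exact hw1
  · intro i hi
    rw [Finset.mem_filter] at hi
    exact (hg i hi.1).1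
  · intro j
    rw [← hp j]
    refine Finset.sum_subset (Finset.filter_subset _ _) fun i hi hni => ?_
    have : w i = 0 := by
      by_contra hw
      exact hni (Finset.mem_filter.mpr ⟨hi, hw⟩)
    rw [this, zero_mul]

lemma snoc_inj {n : ℕ} {b : Bool} {p q : Fin n → Bool}
    (h : (Fin.snoc p b : Fin (n+1) → Bool) = Fin.snoc q b) :
    p = q := by
  have := congrArg Fin.init h
  simpa [Fin.init_snoc] using this

lemma lift_edge {n : ℕ} (X : Finset (Fin (n+1) → Bool)) (b : Bool)
    {u v : Fin n → Bool}
    (h : IsPolyEdge ((X.filter fun x => x (Fin.last n) = b).image Fin.init) u v) :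
    IsPolyEdge X (Fin.snoc u b) (Fin.snoc v b) := by
  classical
  obtain ⟨hne, hmain⟩ := h
  refine ⟨fun e => hne (snoc_inj e), ?_⟩
  intro ν h0 h1 hmem
  refine hmain ν h0 h1 ?_
  obtain ⟨ι, t, w, g, hwpos, hsum, hgS, hcoord⟩ := decode _ _ hmem
  have hlast : ∀ i ∈ t, g i (Fin.last n) = b := by
    apply coord_eq hwpos hsum
    rw [hcoord (Fin.last n)]
    simp only [Pi.add_apply, Pi.smul_apply, smul_eq_mul, toVec, Fin.snoc_last]
    ring
  have key : ∀ i ∈ t, Fin.init (g i) ∈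
      ((((X.filter fun x => x (Fin.last n) = b).image Fin.init).erase u).erase v) := by
    intro i hi
    have hgi := hgS i hi
    rw [Finset.mem_erase, Finset.mem_erase] at hgi
    obtain ⟨hnx, hny, hgX⟩ := hgi
    have hself : Fin.snoc (Fin.init (g i)) b = g i := by
      rw [← hlast i hi]
      exact Fin.snoc_init_self (g i)
    refine Finset.mem_erase.mpr ⟨?_, Finset.mem_erase.mpr ⟨?_, ?_⟩⟩
    · intro e; exact hnx (by rw [← hself, e])
    · intro e; exact hny (by rw [← hself, e])
    · exact Finset.mem_image.mpr ⟨g i, Finset.mem_filter.mpr ⟨hgX, hlast i hi⟩, rfl⟩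
  have hcm : (ν • toVec u + (1 - ν) • toVec v) =
      t.centerMass w (fun i => toVec (Fin.init (g i))) := by
    rw [Finset.centerMass_eq_of_sum_1 _ _ hsum]
    funext j
    rw [Finset.sum_apply]
    have : ∑ i ∈ t, (w i • toVec (Fin.init (g i))) j
        = ∑ i ∈ t, w i * (if g i (Fin.castSucc j) then (1:ℝ) else 0) := by
      refine Finset.sum_congr rfl fun i hi => ?_
      rw [Pi.smul_apply, smul_eq_mul]
      rfl
    rw [this, hcoord (Fin.castSucc j)]
    simp only [Pi.add_apply, Pi.smul_apply, smul_eq_mul, toVec, Fin.snoc_castSucc]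
  rw [hcm]
  refine Finset.centerMass_mem_convexHull t (fun i hi => (hwpos i hi).le)
    (by rw [hsum]; norm_num) (fun i hi => ?_)
  exact Set.mem_image_of_mem _ (key i hi)

lemma connect_edge {n : ℕ} (X : Finset (Fin (n+1) → Bool)) {y z : Fin (n+1) → Bool}
    (hyz : y (Fin.last n) ≠ z (Fin.last n))
    (hmin : ∀ x ∈ X, x (Fin.last n) = z (Fin.last n) →
        (∑ j : Fin n, if z j.castSucc ≠ y j.castSucc then 2^(j:ℕ) else 0) ≤
        (∑ j : Fin n, if x j.castSucc ≠ y j.castSucc then 2^(j:ℕ) else 0)) :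
    IsPolyEdge X y z := by
  classical
  refine ⟨fun e => hyz (by rw [e]), ?_⟩
  intro ν h0 h1 hmem
  obtain ⟨ι, t, w, g, hwpos, hsum, hgS, hcoord⟩ := decode _ _ hmem
  have hr0 : (0:ℝ) < ν * (if y (Fin.last n) then 1 else 0) + (1 - ν) * (if z (Fin.last n) then 1 else 0) := by
    cases hy : y (Fin.last n) <;> cases hz : z (Fin.last n) <;>
      simp_all <;> nlinarith
  have hr1 : ν * (if y (Fin.last n) then 1 else 0) + (1 - ν) * (if z (Fin.last n) then 1 else 0) < 1 := by
    cases hy : y (Fin.last n) <;> cases hz : z (Fin.last n) <;>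
      simp_all <;> nlinarith
  obtain ⟨i, hi, hilast⟩ := coord_mem hwpos hsum hr0 hr1 (by
    rw [hcoord (Fin.last n)]
    simp only [Pi.add_apply, Pi.smul_apply, smul_eq_mul, toVec]) (z (Fin.last n))
  have hagree : ∀ (j : Fin n), y j.castSucc = z j.castSucc → g i j.castSucc = y j.castSucc := by
    intro j hj
    refine coord_eq (g := fun i => g i j.castSucc) (c := y j.castSucc) hwpos hsum ?_ i hi
    rw [hcoord j.castSucc]
    simp only [Pi.add_apply, Pi.smul_apply, smul_eq_mul, toVec, ← hj]
    ring
  have hgi := hgS i hi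
  rw [Finset.mem_erase, Finset.mem_erase] at hgi
  obtain ⟨hnz, hny, hgX⟩ := hgi
  have hle : ∀ j : Fin n,
      (if g i j.castSucc ≠ y j.castSucc then 2^(j:ℕ) else 0) ≤
      (if z j.castSucc ≠ y j.castSucc then 2^(j:ℕ) else 0) := by
    intro j
    by_cases hj : z j.castSucc = y j.castSucc
    · have := hagree j hj.symm
      simp [hj, this]
    · rw [if_pos hj]
      split
      · exact le_refl _
      · exact Nat.zero_le _
  have hWle : (∑ j : Fin n, if g i j.castSucc ≠ y j.castSucc then 2^(j:ℕ) else 0) ≤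
      (∑ j : Fin n, if z j.castSucc ≠ y j.castSucc then 2^(j:ℕ) else 0) :=
    Finset.sum_le_sum (fun j _ => hle j)
  have hWge := hmin (g i) hgX hilast
  have hWeq := (Finset.sum_eq_sum_iff_of_le (fun j _ => hle j)).mp (le_antisymm hWle hWge)
  have : g i = z := by
    funext j
    refine Fin.lastCases ?_ (fun j' => ?_) j
    · rw [hilast]
    · have hj := hWeq j' (Finset.mem_univ j')
      by_cases hz : z j'.castSucc = y j'.castSucc
      · rw [hagree j' hz.symm, hz]
      · have : g i j'.castSucc ≠ y j'.castSucc := by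
          intro e
          rw [if_neg (not_not_intro e), if_pos hz] at hj
          exact absurd hj.symm (pow_ne_zero _ (by norm_num))
        revert this hz
        cases g i j'.castSucc <;> cases z j'.castSucc <;> cases y j'.castSucc <;> simp
  exact hnz this

lemma isGenlex_append {n : ℕ} {b c : Bool} (hbc : b ≠ c) {L1 L2 : List (Fin n → Bool)}
    (h1 : IsGenlex L1) (h2 : IsGenlex L2) :
    IsGenlex (L1.map (fun x => (Fin.snoc x b : Fin (n+1) → Bool)) ++
      L2.map (fun x => (Fin.snoc x c : Fin (n+1) → Bool))) := by
  set f : (Fin n → Bool) → (Fin (n+1) → Bool) := fun x => Fin.snoc x b with hf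
  set g : (Fin n → Bool) → (Fin (n+1) → Bool) := fun x => Fin.snoc x c with hg
  set M := L1.map f ++ L2.map g with hM
  have hlen : M.length = L1.length + L2.length := by simp [hM]
  have getL : ∀ (p : ℕ) (hp : p < L1.length) (h : p < M.length),
      M.get ⟨p, h⟩ = f (L1.get ⟨p, hp⟩) := by
    intro p hp h
    rw [List.get_eq_getElem, List.getElem_append_left (by simpa using hp),
      List.getElem_map]
    rfl
  have getR : ∀ (p : ℕ) (hp : L1.length ≤ p) (h : p < M.length),
      M.get ⟨p, h⟩ = g (L2.get ⟨p - L1.length, by rw [hlen] at h; omega⟩) := by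
    intro p hp h
    rw [List.get_eq_getElem, List.getElem_append_right (by simpa using hp),
      List.getElem_map]
    simp
  intro k i j m hij hjm hm hsuf
  cases k with
  | zero => exact sameSuffix_zero _ _
  | succ k' =>
    by_cases hmL : m < L1.length
    · have hiL : i < L1.length := by omega
      have hjL : j < L1.length := by omega
      rw [getL i hiL, getL m hmL] at hsuf
      rw [getL i hiL, getL j hjL]
      rw [sameSuffix_snoc] at hsuf ⊢
      exact ⟨rfl, h1 k' i j m hij hjm hmL hsuf.2⟩
    · by_cases hiL : i < L1.length
      · rw [getL i hiL, getR m (by omega)] at hsuf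
        rw [sameSuffix_snoc] at hsuf
        exact absurd hsuf.1 hbc
      · have him : L1.length ≤ i := by omega
        have hmm : m - L1.length < L2.length := by rw [hlen] at hm; omega
        rw [getR i him, getR m (by omega)] at hsuf
        rw [getR i him, getR j (by omega)]
        rw [sameSuffix_snoc] at hsuf ⊢
        refine ⟨rfl, ?_⟩
        exact h2 k' (i - L1.length) (j - L1.length) (m - L1.length)
          (by omega) (by omega) hmm hsuf.2

lemma mem_slice {n : ℕ} (X : Finset (Fin (n+1) → Bool)) (b : Bool) (u : Fin n → Bool) :
    u ∈ (X.filter fun x => x (Fin.last n) = b).image Fin.init ↔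
      (Fin.snoc u b : Fin (n+1) → Bool) ∈ X := by
  classical
  constructor
  · intro h
    obtain ⟨v, hv, rfl⟩ := Finset.mem_image.mp h
    rw [Finset.mem_filter] at hv
    rw [show (Fin.snoc (Fin.init v) b : Fin (n+1) → Bool) = v from by
      rw [← hv.2]; exact Fin.snoc_init_self v]
    exact hv.1
  · intro h
    exact Finset.mem_image.mpr ⟨Fin.snoc u b,
      Finset.mem_filter.mpr ⟨h, by simp⟩, by simp [Fin.init_snoc]⟩

lemma ordering_append {n : ℕ} (X : Finset (Fin (n+1) → Bool)) (b : Bool)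
    {L1 L2 : List (Fin n → Bool)}
    (h1 : IsOrdering ((X.filter fun x => x (Fin.last n) = b).image Fin.init) L1)
    (h2 : IsOrdering ((X.filter fun x => x (Fin.last n) = !b).image Fin.init) L2) :
    IsOrdering X (L1.map (fun x => (Fin.snoc x b : Fin (n+1) → Bool)) ++
      L2.map (fun x => (Fin.snoc x (!b) : Fin (n+1) → Bool))) := by
  constructor
  · refine List.Nodup.append (h1.1.map fun p q h => snoc_inj h)
      (h2.1.map fun p q h => snoc_inj h) ?_
    intro a ha1 ha2
    obtain ⟨u, _, rfl⟩ := List.mem_map.mp ha1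
    obtain ⟨v, _, hv⟩ := List.mem_map.mp ha2
    have := congrFun hv (Fin.last n)
    simp at this
  · intro x
    constructor
    · intro hx
      rcases List.mem_append.mp hx with h | h
      · obtain ⟨u, hu, rfl⟩ := List.mem_map.mp h
        exact (mem_slice X b u).mp ((h1.2 u).mp hu)
      · obtain ⟨u, hu, rfl⟩ := List.mem_map.mp h
        exact (mem_slice X (!b) u).mp ((h2.2 u).mp hu)
    · intro hx
      have hcase : x (Fin.last n) = b ∨ x (Fin.last n) = !b := by
        cases (x (Fin.last n)) <;> cases b <;> simp
      rcases hcase with hc | hc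
      · refine List.mem_append.mpr (Or.inl (List.mem_map.mpr ⟨Fin.init x, ?_, ?_⟩))
        · exact (h1.2 _).mpr ((mem_slice X b _).mpr (by rw [← hc, Fin.snoc_init_self]; exact hx))
        · rw [← hc]; exact Fin.snoc_init_self x
      · refine List.mem_append.mpr (Or.inr (List.mem_map.mpr ⟨Fin.init x, ?_, ?_⟩))
        · exact (h2.2 _).mpr ((mem_slice X (!b) _).mpr (by rw [← hc, Fin.snoc_init_self]; exact hx))
        · rw [← hc]; exact Fin.snoc_init_self x

lemma getLast?_map' {α β : Type*} (f : α → β) (l : List α) :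
    (l.map f).getLast? = l.getLast?.map f := by
  induction l with
  | nil => rfl
  | cons a t iht =>
    cases t with
    | nil => rfl
    | cons b t2 =>
      simpa [List.getLast?_cons_cons] using iht

lemma head?_append_left {α : Type*} {l r : List α} {a : α} (h : l.head? = some a) :
    (l ++ r).head? = some a := by
  cases l with
  | nil => simp at h
  | cons x t => simpa using h

end Aux

theorem skeleton_genlex_hamPath {n : ℕ} (X : Finset (Fin n → Bool))
    (hX : X.Nonempty) (x0 : Fin n → Bool) (hx0 : x0 ∈ X) :
    ∃ L : List (Fin n → Bool),
      IsOrdering X L ∧ IsGenlex L ∧ L.Chain' (IsPolyEdge X) ∧ L.head? = some x0 := by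
  clear hX
  induction n with
  | zero =>
    refine ⟨[x0], ⟨List.nodup_singleton _, fun x => ?_⟩, ?_, ?_, rfl⟩
    · constructor
      · intro hx; rw [List.mem_singleton] at hx; rw [hx]; exact hx0
      · intro _; rw [List.mem_singleton]; exact funext fun i => i.elim0
    · intro k i j m hij hjm hm hsuf
      have hm' : m < 1 := by simpa using hm
      have hi0 : i = 0 := by omega
      have hj0 : j = 0 := by omega
      have hm0 : m = 0 := by omega
      subst hi0; subst hj0; subst hm0
      exact hsuf
    · exact List.isChain_singleton _
  | succ n ih =>
    classical
    set b := x0 (Fin.last n) with hb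
    set X1 := (X.filter fun x => x (Fin.last n) = b).image Fin.init with hX1
    set X2 := (X.filter fun x => x (Fin.last n) = !b).image Fin.init with hX2
    have hx0' : Fin.init x0 ∈ X1 := (mem_slice X b _).mpr (by
      rw [hb, Fin.snoc_init_self]; exact hx0)
    obtain ⟨L1, ord1, gen1, chain1, head1⟩ := ih X1 (Fin.init x0) hx0'
    have hL1ne : L1 ≠ [] := by
      intro e; rw [e] at head1; simp at head1
    set y1 := L1.getLast hL1ne with hy1
    have hy1X1 : y1 ∈ X1 := (ord1.2 y1).mp (List.getLast_mem hL1ne)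
    set ty := (Fin.snoc y1 b : Fin (n+1) → Bool) with hty
    have htyX : ty ∈ X := (mem_slice X b y1).mp hy1X1
    -- obtain second block
    have hkey : ∃ L2 : List (Fin n → Bool), IsOrdering X2 L2 ∧ IsGenlex L2 ∧
        List.Chain' (IsPolyEdge X2) L2 ∧
        (∀ v ∈ (L2.map (fun x => (Fin.snoc x (!b) : Fin (n+1) → Bool))).head?,
          IsPolyEdge X ty v) := by
      by_cases hX2e : X2 = ∅
      · refine ⟨[], ⟨List.nodup_nil, fun x => by simp [hX2e]⟩, ?_, List.isChain_nil, by simp⟩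
        intro k i j m hij hjm hm hsuf
        simp at hm
      · have hX2ne : X2.Nonempty := Finset.nonempty_iff_ne_empty.mpr hX2e
        have hfne : (X.filter fun x => x (Fin.last n) = !b).Nonempty := by
          obtain ⟨u, hu⟩ := hX2ne
          obtain ⟨v, hv, _⟩ := Finset.mem_image.mp hu
          exact ⟨v, hv⟩
        obtain ⟨tz, htz, hmin⟩ := Finset.exists_min_image
          (X.filter fun x => x (Fin.last n) = !b)
          (fun x => ∑ j : Fin n, if x j.castSucc ≠ ty j.castSucc then 2^(j:ℕ) else 0) hfne
        rw [Finset.mem_filter] at htz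
        obtain ⟨htzX, htzlast⟩ := htz
        have hz2 : Fin.init tz ∈ X2 := by
          refine Finset.mem_image.mpr ⟨tz, Finset.mem_filter.mpr ⟨htzX, htzlast⟩, rfl⟩
        obtain ⟨L2, ord2, gen2, chain2, head2⟩ := ih X2 (Fin.init tz) hz2
        refine ⟨L2, ord2, gen2, chain2, ?_⟩
        intro v hv
        rw [List.head?_map, head2] at hv
        have hv' : v = Fin.snoc (Fin.init tz) (!b) := by
          simpa [eq_comm] using hv
        have hvz : v = tz := by
          rw [hv', ← htzlast]
          exact Fin.snoc_init_self tz
        rw [hvz]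
        refine connect_edge X ?_ ?_
        · rw [hty, htzlast]
          simp [Fin.snoc_last]
        · intro x hxX hxlast
          rw [htzlast] at hxlast
          exact hmin x (Finset.mem_filter.mpr ⟨hxX, hxlast⟩)
    obtain ⟨L2, ord2, gen2, chain2, hconn⟩ := hkey
    refine ⟨L1.map (fun x => (Fin.snoc x b : Fin (n+1) → Bool)) ++
      L2.map (fun x => (Fin.snoc x (!b) : Fin (n+1) → Bool)), ?_, ?_, ?_, ?_⟩
    · exact ordering_append X b ord1 ord2
    · exact isGenlex_append (by simp) gen1 gen2
    · unfold List.Chain' at chain1 chain2 ⊢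
      rw [List.isChain_append]
      refine ⟨?_, ?_, ?_⟩
      · rw [List.isChain_map]
        exact chain1.imp (fun a c h => lift_edge X b h)
      · rw [List.isChain_map]
        exact chain2.imp (fun a c h => lift_edge X (!b) h)
      · intro u hu v hv
        rw [getLast?_map', List.getLast?_eq_getLast hL1ne] at hu
        have hu' : u = ty := by
          simpa [hty, hy1, eq_comm] using hu
        rw [hu']
        exact hconn v hv
    · refine head?_append_left ?_
      rw [List.head?_map, head1]
      simp only [Option.map_some, Option.some.injEq]
      rw [hb]
      exact Fin.snoc_init_self x0
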